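/- arXiv:2011.13732 — 3 statements merged into one kernel-verified Lean document; each statement's English description precedes it below -/
import Mathlib

section
/- Let F_hex = x1x2x3x4 + x2x3x6x7 + x3x4x7x8 + x1x4x5x8 + x1x2x5x6 + x5x6x7x8 and let Λ_2 be the list of 18 degree-two monomials ∂_1∂_3, ∂_2∂_4, ∂_1∂_8, ∂_4∂_5, ∂_2∂_5, ∂_1∂_6, ∂_3∂_6, ∂_2∂_7, ∂_4∂_7, ∂_3∂_8, ∂_6∂_8, ∂_5∂_7, ∂_1∂_2, ∂_1∂_4, ∂_1∂_5, ∂_2∂_6, ∂_2∂_3, ∂_3∂_4. Then the 18×18 second Hessian matrix H²_{F_hex} = (e·e'·F_hex)_{e,e'∈Λ_2} (whose entries are real constants) has eigenvalues 1 and −1, each with multiplicity 9; in particular its determinant is nonzero. -/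
open MvPolynomial

noncomputable section

lemma pderiv_commute {n : ℕ} (i j : Fin n) (f : MvPolynomial (Fin n) ℝ) :
    pderiv i (pderiv j f) = pderiv j (pderiv i f) := by
  rcases eq_or_ne i j with rfl | hij
  · rfl
  · induction f using MvPolynomial.induction_on' with
    | monomial m a =>
        simp only [pderiv_monomial]
        have h1 : (m - Finsupp.single j 1 : Fin n →₀ ℕ) i = m i := by
          rw [Finsupp.tsub_apply, Finsupp.single_eq_of_ne hij, tsub_zero]
        have h2 : (m - Finsupp.single i 1 : Fin n →₀ ℕ) j = m j := by
          rw [Finsupp.tsub_apply, Finsupp.single_eq_of_ne hij.symm, tsub_zero]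
        rw [h1, h2, tsub_right_comm]
        congr 1
        ring
    | add p q hp hq => simp [hp, hq]

/-- The set of the partial derivative operators `∂ᵢ` on `ℝ[x₁, …, xₙ]`. -/
def pdSet (n : ℕ) : Set (Module.End ℝ (MvPolynomial (Fin n) ℝ)) :=
  Set.range fun i : Fin n =>
    ((pderiv i : Derivation ℝ (MvPolynomial (Fin n) ℝ) (MvPolynomial (Fin n) ℝ)) :
      MvPolynomial (Fin n) ℝ →ₗ[ℝ] MvPolynomial (Fin n) ℝ)

instance pdCommRing (n : ℕ) : CommRing (Algebra.adjoin ℝ (pdSet n)) :=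
  Algebra.adjoinCommRingOfComm ℝ (by
    rintro _ ⟨i, rfl⟩ _ ⟨j, rfl⟩
    apply LinearMap.ext
    intro f
    exact pderiv_commute i j f)

/-- The algebra map sending a polynomial `f` (in the "∂ variables") to the differential
operator `f(∂₁, …, ∂ₙ)` acting on `ℝ[x₁, …, xₙ]`; thus `dop n f F` is the result of
applying the differential operator `f(∂₁, …, ∂ₙ)` to the polynomial `F`. -/
def dop (n : ℕ) : MvPolynomial (Fin n) ℝ →ₐ[ℝ] Module.End ℝ (MvPolynomial (Fin n) ℝ) :=
  (Algebra.adjoin ℝ (pdSet n)).val.comp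
    (aeval fun i : Fin n =>
      (⟨_, Algebra.subset_adjoin (Set.mem_range_self i)⟩ : Algebra.adjoin ℝ (pdSet n)))

/-- `Ann F`, the annihilator of `F`: the ideal of all differential-operator polynomials `f`
with `f(∂₁, …, ∂ₙ) F = 0`. -/
def annIdeal {n : ℕ} (F : MvPolynomial (Fin n) ℝ) : Ideal (MvPolynomial (Fin n) ℝ) where
  carrier := {f | dop n f F = 0}
  add_mem' := by
    intro a b ha hb
    simp only [Set.mem_setOf_eq] at *
    rw [map_add, LinearMap.add_apply, ha, hb, add_zero]
  zero_mem' := by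
    simp only [Set.mem_setOf_eq, map_zero, LinearMap.zero_apply]
  smul_mem' := by
    intro c f hf
    simp only [Set.mem_setOf_eq] at *
    rw [smul_eq_mul, map_mul, Module.End.mul_apply, hf, map_zero]

/-- The Artinian Gorenstein algebra `A_F = ℝ[∂₁, …, ∂ₙ]/Ann(F)`. -/
abbrev AF {n : ℕ} (F : MvPolynomial (Fin n) ℝ) := MvPolynomial (Fin n) ℝ ⧸ annIdeal F

/-- The degree-`k` homogeneous component `(A_F)_k` of `A_F`, as a submodule of `A_F`:
the image of the space of homogeneous polynomials of degree `k` under the quotient map. -/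
def gradeA {n : ℕ} (F : MvPolynomial (Fin n) ℝ) (k : ℕ) : Submodule ℝ (AF F) :=
  Submodule.map (Ideal.Quotient.mkₐ ℝ (annIdeal F)).toLinearMap
    (homogeneousSubmodule (Fin n) ℝ k)

/-- `ℓ ∈ A_F` is a strong Lefschetz element of `A_F` (with socle degree `s`) if the
multiplication map `×ℓ^(s-2k) : (A_F)_k → (A_F)_(s-k)` is bijective for every `k` with
`0 ≤ k ≤ s/2`. -/
def IsSLelem {n : ℕ} (F : MvPolynomial (Fin n) ℝ) (s : ℕ) (ℓ : AF F) : Prop :=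
  ∀ k : ℕ, 2 * k ≤ s →
    Set.BijOn (fun f => ℓ ^ (s - 2 * k) * f) (gradeA F k) (gradeA F (s - k))

/-- `A_F` (with socle degree `s`) has the strong Lefschetz property. -/
def HasSLP {n : ℕ} (F : MvPolynomial (Fin n) ℝ) (s : ℕ) : Prop :=
  ∃ ℓ ∈ gradeA F 1, IsSLelem F s ℓ

/-- `A_F` (with socle degree `s`) satisfies the Hodge–Riemann relation with respect to the
class `ℓ` of a linear form `L`: for every `k` with `0 ≤ k ≤ s/2`, the bilinear form
`Q^k_ℓ(f, g) = (-1)^k P^k(f, ℓ^(s-2k) g)` (where `P^k(f, g) = f g F` is the Poincaré duality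
pairing) is positive definite on the kernel of `×ℓ^(s-2k+1) : (A_F)_k → (A_F)_(s-k+1)`,
i.e. `Q^k_ℓ(f, f) > 0` for every nonzero `f ∈ (A_F)_k` in that kernel. -/
def SatisfiesHRR {n : ℕ} (F : MvPolynomial (Fin n) ℝ) (s : ℕ) (L : MvPolynomial (Fin n) ℝ) :
    Prop :=
  ∀ k : ℕ, 2 * k ≤ s →
    ∀ f ∈ homogeneousSubmodule (Fin n) ℝ k,
      dop n (L ^ (s - 2 * k + 1) * f) F = 0 →
      Ideal.Quotient.mk (annIdeal F) f ≠ 0 →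
      0 < (-1 : ℝ) ^ k * constantCoeff (dop n (L ^ (s - 2 * k) * f * f) F)

/-- The facet polynomial of the regular hexahedron (cube)
(vertices `0,…,7` standing for `1,…,8`). -/
def Fhex : MvPolynomial (Fin 8) ℝ :=
  X 0 * X 1 * X 2 * X 3 + X 1 * X 2 * X 5 * X 6 + X 2 * X 3 * X 6 * X 7 +
    X 0 * X 3 * X 4 * X 7 + X 0 * X 1 * X 4 * X 5 + X 4 * X 5 * X 6 * X 7

/-- The list `Λ₂` of 18 degree-two monomials
`∂₁∂₃, ∂₂∂₄, ∂₁∂₈, ∂₄∂₅, ∂₂∂₅, ∂₁∂₆, ∂₃∂₆, ∂₂∂₇, ∂₄∂₇, ∂₃∂₈, ∂₆∂₈, ∂₅∂₇,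
∂₁∂₂, ∂₁∂₄, ∂₁∂₅, ∂₂∂₆, ∂₂∂₃, ∂₃∂₄` (in `0`-based indexing). -/
def lam2 : Fin 18 → MvPolynomial (Fin 8) ℝ :=
  ![X 0 * X 2, X 1 * X 3, X 0 * X 7, X 3 * X 4, X 1 * X 4, X 0 * X 5,
    X 2 * X 5, X 1 * X 6, X 3 * X 6, X 2 * X 7, X 5 * X 7, X 4 * X 6,
    X 0 * X 1, X 0 * X 3, X 0 * X 4, X 1 * X 5, X 1 * X 2, X 2 * X 3]


lemma dop_X' (i : Fin 8) (F : MvPolynomial (Fin 8) ℝ) : dop 8 (X i) F = pderiv i F := by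
  simp [dop]

lemma dop_entry (a b c d : Fin 8) (F : MvPolynomial (Fin 8) ℝ) :
    dop 8 ((X a * X b) * (X c * X d)) F = pderiv a (pderiv b (pderiv c (pderiv d F))) := by
  simp only [map_mul, Module.End.mul_apply, dop_X']

def eHex : Fin 2 × Fin 9 ≃ Fin 18 where
  toFun p := ![![0,2,4,6,8,10,12,13,14], ![1,3,5,7,9,11,17,16,15]] p.1 p.2
  invFun i := (![0,1,0,1,0,1,0,1,0,1,0,1,0,0,0,1,1,1] i, ![0,0,1,1,2,2,3,3,4,4,5,5,6,7,8,8,7,6] i)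
  left_inv := by decide
  right_inv := by decide

def Bhex : Matrix (Fin 2) (Fin 2) ℝ := !![0,1;1,0]

def BDZ : Matrix (Fin 2 × Fin 9) (Fin 2 × Fin 9) ℝ :=
  @Matrix.blockDiagonal (Fin 2) (Fin 2) (Fin 9) ℝ _
    (@CommMonoidWithZero.toZero ℝ (@CommSemiring.toCommMonoidWithZero ℝ
      (@CommRing.toCommSemiring ℝ Real.commRing))) (fun _ => Bhex)

def BDZP : Matrix (Fin 2 × Fin 9) (Fin 2 × Fin 9) (Polynomial ℝ) :=
  @Matrix.blockDiagonal (Fin 2) (Fin 2) (Fin 9) (Polynomial ℝ) _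
    (@CommMonoidWithZero.toZero (Polynomial ℝ) (@CommSemiring.toCommMonoidWithZero (Polynomial ℝ)
      (@CommRing.toCommSemiring (Polynomial ℝ) (@Polynomial.commRing ℝ Real.commRing))))
    (fun _ => Matrix.charmatrix Bhex)

lemma lam2_0 : lam2 0 = X 0 * X 2 := rfl
lemma lam2_1 : lam2 1 = X 1 * X 3 := rfl
lemma lam2_2 : lam2 2 = X 0 * X 7 := rfl
lemma lam2_3 : lam2 3 = X 3 * X 4 := rfl
lemma lam2_4 : lam2 4 = X 1 * X 4 := rfl
lemma lam2_5 : lam2 5 = X 0 * X 5 := rfl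
lemma lam2_6 : lam2 6 = X 2 * X 5 := rfl
lemma lam2_7 : lam2 7 = X 1 * X 6 := rfl
lemma lam2_8 : lam2 8 = X 3 * X 6 := rfl
lemma lam2_9 : lam2 9 = X 2 * X 7 := rfl
lemma lam2_10 : lam2 10 = X 5 * X 7 := rfl
lemma lam2_11 : lam2 11 = X 4 * X 6 := rfl
lemma lam2_12 : lam2 12 = X 0 * X 1 := rfl
lemma lam2_13 : lam2 13 = X 0 * X 3 := rfl
lemma lam2_14 : lam2 14 = X 0 * X 4 := rfl
lemma lam2_15 : lam2 15 = X 1 * X 5 := rfl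
lemma lam2_16 : lam2 16 = X 1 * X 2 := rfl
lemma lam2_17 : lam2 17 = X 2 * X 3 := rfl

lemma dd_0 : pderiv (0:Fin 8) (pderiv (2:Fin 8) Fhex) = X 1 * X 3 := by
  simp [Fhex, pderiv_mul, pderiv_X, Pi.single_apply]
  all_goals ring

lemma dd_1 : pderiv (1:Fin 8) (pderiv (3:Fin 8) Fhex) = X 0 * X 2 := by
  simp [Fhex, pderiv_mul, pderiv_X, Pi.single_apply]
  all_goals ring

lemma dd_2 : pderiv (0:Fin 8) (pderiv (7:Fin 8) Fhex) = X 3 * X 4 := by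
  simp [Fhex, pderiv_mul, pderiv_X, Pi.single_apply]
  all_goals ring

lemma dd_3 : pderiv (3:Fin 8) (pderiv (4:Fin 8) Fhex) = X 0 * X 7 := by
  simp [Fhex, pderiv_mul, pderiv_X, Pi.single_apply]
  all_goals ring

lemma dd_4 : pderiv (1:Fin 8) (pderiv (4:Fin 8) Fhex) = X 0 * X 5 := by
  simp [Fhex, pderiv_mul, pderiv_X, Pi.single_apply]
  all_goals ring

lemma dd_5 : pderiv (0:Fin 8) (pderiv (5:Fin 8) Fhex) = X 1 * X 4 := by
  simp [Fhex, pderiv_mul, pderiv_X, Pi.single_apply]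
  all_goals ring

lemma dd_6 : pderiv (2:Fin 8) (pderiv (5:Fin 8) Fhex) = X 1 * X 6 := by
  simp [Fhex, pderiv_mul, pderiv_X, Pi.single_apply]
  all_goals ring

lemma dd_7 : pderiv (1:Fin 8) (pderiv (6:Fin 8) Fhex) = X 2 * X 5 := by
  simp [Fhex, pderiv_mul, pderiv_X, Pi.single_apply]
  all_goals ring

lemma dd_8 : pderiv (3:Fin 8) (pderiv (6:Fin 8) Fhex) = X 2 * X 7 := by
  simp [Fhex, pderiv_mul, pderiv_X, Pi.single_apply]
  all_goals ring

lemma dd_9 : pderiv (2:Fin 8) (pderiv (7:Fin 8) Fhex) = X 3 * X 6 := by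
  simp [Fhex, pderiv_mul, pderiv_X, Pi.single_apply]
  all_goals ring

lemma dd_10 : pderiv (5:Fin 8) (pderiv (7:Fin 8) Fhex) = X 4 * X 6 := by
  simp [Fhex, pderiv_mul, pderiv_X, Pi.single_apply]
  all_goals ring

lemma dd_11 : pderiv (4:Fin 8) (pderiv (6:Fin 8) Fhex) = X 5 * X 7 := by
  simp [Fhex, pderiv_mul, pderiv_X, Pi.single_apply]
  all_goals ring

lemma dd_12 : pderiv (0:Fin 8) (pderiv (1:Fin 8) Fhex) = X 2 * X 3 + X 4 * X 5 := by
  simp [Fhex, pderiv_mul, pderiv_X, Pi.single_apply]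
  all_goals ring

lemma dd_13 : pderiv (0:Fin 8) (pderiv (3:Fin 8) Fhex) = X 1 * X 2 + X 4 * X 7 := by
  simp [Fhex, pderiv_mul, pderiv_X, Pi.single_apply]
  all_goals ring

lemma dd_14 : pderiv (0:Fin 8) (pderiv (4:Fin 8) Fhex) = X 3 * X 7 + X 1 * X 5 := by
  simp [Fhex, pderiv_mul, pderiv_X, Pi.single_apply]
  all_goals ring

lemma dd_15 : pderiv (1:Fin 8) (pderiv (5:Fin 8) Fhex) = X 2 * X 6 + X 0 * X 4 := by
  simp [Fhex, pderiv_mul, pderiv_X, Pi.single_apply]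
  all_goals ring

lemma dd_16 : pderiv (1:Fin 8) (pderiv (2:Fin 8) Fhex) = X 0 * X 3 + X 5 * X 6 := by
  simp [Fhex, pderiv_mul, pderiv_X, Pi.single_apply]
  all_goals ring

lemma dd_17 : pderiv (2:Fin 8) (pderiv (3:Fin 8) Fhex) = X 0 * X 1 + X 6 * X 7 := by
  simp [Fhex, pderiv_mul, pderiv_X, Pi.single_apply]
  all_goals ring


lemma lam2m_0 : lam2 ⟨0, by decide⟩ = X 0 * X 2 := rfl
lemma lam2m_1 : lam2 ⟨1, by decide⟩ = X 1 * X 3 := rfl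
lemma lam2m_2 : lam2 ⟨2, by decide⟩ = X 0 * X 7 := rfl
lemma lam2m_3 : lam2 ⟨3, by decide⟩ = X 3 * X 4 := rfl
lemma lam2m_4 : lam2 ⟨4, by decide⟩ = X 1 * X 4 := rfl
lemma lam2m_5 : lam2 ⟨5, by decide⟩ = X 0 * X 5 := rfl
lemma lam2m_6 : lam2 ⟨6, by decide⟩ = X 2 * X 5 := rfl
lemma lam2m_7 : lam2 ⟨7, by decide⟩ = X 1 * X 6 := rfl
lemma lam2m_8 : lam2 ⟨8, by decide⟩ = X 3 * X 6 := rfl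
lemma lam2m_9 : lam2 ⟨9, by decide⟩ = X 2 * X 7 := rfl
lemma lam2m_10 : lam2 ⟨10, by decide⟩ = X 5 * X 7 := rfl
lemma lam2m_11 : lam2 ⟨11, by decide⟩ = X 4 * X 6 := rfl
lemma lam2m_12 : lam2 ⟨12, by decide⟩ = X 0 * X 1 := rfl
lemma lam2m_13 : lam2 ⟨13, by decide⟩ = X 0 * X 3 := rfl
lemma lam2m_14 : lam2 ⟨14, by decide⟩ = X 0 * X 4 := rfl
lemma lam2m_15 : lam2 ⟨15, by decide⟩ = X 1 * X 5 := rfl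
lemma lam2m_16 : lam2 ⟨16, by decide⟩ = X 1 * X 2 := rfl
lemma lam2m_17 : lam2 ⟨17, by decide⟩ = X 2 * X 3 := rfl

set_option maxHeartbeats 12000000 in
lemma Hmat_eq : (Matrix.of fun i j : Fin 18 =>
    constantCoeff (dop 8 (lam2 i * lam2 j) Fhex)) =
    Matrix.reindex eHex eHex BDZ := by
  ext i j
  rw [Matrix.of_apply]
  fin_cases i <;> fin_cases j <;>
    simp only [lam2_0, lam2m_0, lam2_1, lam2m_1, lam2_2, lam2m_2, lam2_3, lam2m_3, lam2_4, lam2m_4, lam2_5, lam2m_5, lam2_6, lam2m_6, lam2_7, lam2m_7, lam2_8, lam2m_8, lam2_9, lam2m_9, lam2_10, lam2m_10, lam2_11, lam2m_11, lam2_12, lam2m_12, lam2_13, lam2m_13, lam2_14, lam2m_14, lam2_15, lam2m_15, lam2_16, lam2m_16, lam2_17, lam2m_17, dop_entry, dd_0, dd_1, dd_2, dd_3, dd_4, dd_5, dd_6, dd_7, dd_8, dd_9, dd_10, dd_11, dd_12, dd_13, dd_14, dd_15, dd_16, dd_17] <;>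
    (conv_lhs => simp [pderiv_mul, pderiv_X, Pi.single_apply]) <;> rfl


lemma charmatrix_bd : Matrix.charmatrix BDZ = BDZP := by
  ext x y
  rcases x with ⟨i, k⟩; rcases y with ⟨j, l⟩
  by_cases h : k = l
  · subst h
    by_cases hij : i = j
    · subst hij; simp [Matrix.charmatrix_apply, BDZ, BDZP, Matrix.blockDiagonal_apply]
    · simp [Matrix.charmatrix_apply, BDZ, BDZP, Matrix.blockDiagonal_apply,
        Matrix.diagonal_apply, hij, Prod.ext_iff]
  · simp [Matrix.charmatrix_apply, BDZ, BDZP, Matrix.blockDiagonal_apply,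
      Matrix.diagonal_apply, h, Prod.ext_iff]

lemma charpoly_B : Bhex.charpoly =
    (Polynomial.X - Polynomial.C 1) * (Polynomial.X + Polynomial.C 1) := by
  rw [Matrix.charpoly, Matrix.det_fin_two]
  simp [Matrix.charmatrix_apply, Bhex, Matrix.diagonal_apply]
  ring

/-- The second Hessian matrix of the facet polynomial of the cube with respect to the list
`Λ₂` of 18 degree-two monomials has eigenvalues `1` and `-1`, each with multiplicity `9`
(equivalently, its characteristic polynomial is `(x-1)⁹(x+1)⁹`); in particular its
determinant is nonzero. -/
theorem hexahedron_second_hessian_eigenvalues :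
    (Matrix.of fun i j : Fin 18 =>
        constantCoeff (dop 8 (lam2 i * lam2 j) Fhex)).charpoly =
        (Polynomial.X - Polynomial.C 1) ^ 9 * (Polynomial.X + Polynomial.C 1) ^ 9 ∧
      (Matrix.of fun i j : Fin 18 =>
        constantCoeff (dop 8 (lam2 i * lam2 j) Fhex)).det ≠ 0 := by
  rw [Hmat_eq]
  constructor
  · rw [Matrix.charpoly_reindex, Matrix.charpoly, charmatrix_bd, BDZP, Matrix.det_blockDiagonal]
    rw [Finset.prod_const, Finset.card_univ, Fintype.card_fin]
    rw [← Matrix.charpoly, charpoly_B, mul_pow]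
  · rw [Matrix.det_reindex_self, BDZ, Matrix.det_blockDiagonal]
    simp [Bhex, Matrix.det_fin_two]

end
end

section
/- Let F_oct = x1x2x3 + x1x3x4 + x1x4x5 + x1x2x5 + x2x3x6 + x3x4x6 + x4x5x6 + x2x5x6 and A = ℝ[∂_1,…,∂_6]/Ann(F_oct). Then A is isomorphic as an ℝ-algebra to ℝ[t_1,t_2,t_3]/(t_1², t_2², t_3²), via the map induced by ∂_1, ∂_6 ↦ t_1, ∂_2, ∂_4 ↦ t_2, ∂_3, ∂_5 ↦ t_3. -/
open MvPolynomial

noncomputable section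

/-- The facet polynomial of the regular octahedron
(vertices `0,…,5` standing for `1,…,6`). -/
def Foct : MvPolynomial (Fin 6) ℝ :=
  X 0 * X 1 * X 2 + X 0 * X 2 * X 3 + X 0 * X 3 * X 4 + X 0 * X 1 * X 4 +
    X 1 * X 2 * X 5 + X 2 * X 3 * X 5 + X 3 * X 4 * X 5 + X 1 * X 4 * X 5

/-- The ideal `(t₁², t₂², t₃²)` of `ℝ[t₁, t₂, t₃]`. -/
def Joct : Ideal (MvPolynomial (Fin 3) ℝ) :=
  Ideal.span {(X 0 : MvPolynomial (Fin 3) ℝ) ^ 2, (X 1 : MvPolynomial (Fin 3) ℝ) ^ 2,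
    (X 2 : MvPolynomial (Fin 3) ℝ) ^ 2}

/-- The map `ℝ[∂₁, …, ∂₆] → ℝ[t₁,t₂,t₃]/(t₁², t₂², t₃²)` sending
`∂₁, ∂₆ ↦ t₁`, `∂₂, ∂₄ ↦ t₂`, `∂₃, ∂₅ ↦ t₃`. -/
def PhiOct : MvPolynomial (Fin 6) ℝ →ₐ[ℝ] MvPolynomial (Fin 3) ℝ ⧸ Joct :=
  aeval fun i : Fin 6 => Ideal.Quotient.mk Joct (X (![0, 1, 2, 1, 2, 0] i))

namespace OctAux

lemma dop_X_apply {n : ℕ} (i : Fin n) (f : MvPolynomial (Fin n) ℝ) :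
    dop n (X i) f = pderiv i f := by simp [dop]

lemma dop_mul_apply {n : ℕ} (a b f : MvPolynomial (Fin n) ℝ) :
    dop n (a * b) f = dop n a (dop n b f) := by rw [map_mul]; rfl

lemma dop_C_apply {n : ℕ} (a : ℝ) (f : MvPolynomial (Fin n) ℝ) :
    dop n (C a) f = a • f := by
  rw [← MvPolynomial.algebraMap_eq, AlgHom.commutes]
  rfl

lemma mem_ann_iff {n : ℕ} (F f : MvPolynomial (Fin n) ℝ) :
    f ∈ annIdeal F ↔ dop n f F = 0 := Iff.rfl

def piOct : MvPolynomial (Fin 6) ℝ →ₐ[ℝ] MvPolynomial (Fin 3) ℝ :=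
  aeval fun i : Fin 6 => X (![0, 1, 2, 1, 2, 0] i)

def iotaOct : MvPolynomial (Fin 3) ℝ →ₐ[ℝ] MvPolynomial (Fin 6) ℝ :=
  aeval fun i : Fin 3 => X (![0, 1, 2] i)

lemma phi_eq (f : MvPolynomial (Fin 6) ℝ) :
    PhiOct f = Ideal.Quotient.mk Joct (piOct f) := by
  have h : PhiOct = (Ideal.Quotient.mkₐ ℝ Joct).comp piOct := by
    apply MvPolynomial.algHom_ext
    intro i
    simp [PhiOct, piOct]
  rw [h]; rfl

def Dspan : Ideal (MvPolynomial (Fin 6) ℝ) :=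
  Ideal.span {X 3 - X 1, X 4 - X 2, X 5 - X 0}

lemma fold_X (i : Fin 6) : X i - iotaOct (piOct (X i)) ∈ Dspan := by
  have h0 : iotaOct (piOct (X 0)) = X 0 := by
    have : (![0, 1, 2, 1, 2, 0] : Fin 6 → Fin 3) 0 = 0 := by decide
    simp [piOct, iotaOct, this]
  have h1 : iotaOct (piOct (X 1)) = X 1 := by
    have : (![0, 1, 2, 1, 2, 0] : Fin 6 → Fin 3) 1 = 1 := by decide
    simp [piOct, iotaOct, this]
  have h2 : iotaOct (piOct (X 2)) = X 2 := by
    have : (![0, 1, 2, 1, 2, 0] : Fin 6 → Fin 3) 2 = 2 := by decide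
    simp [piOct, iotaOct, this]
  have h3 : iotaOct (piOct (X 3)) = X 1 := by
    have : (![0, 1, 2, 1, 2, 0] : Fin 6 → Fin 3) 3 = 1 := by decide
    simp [piOct, iotaOct, this]
  have h4 : iotaOct (piOct (X 4)) = X 2 := by
    have : (![0, 1, 2, 1, 2, 0] : Fin 6 → Fin 3) 4 = 2 := by decide
    simp [piOct, iotaOct, this]
  have h5 : iotaOct (piOct (X 5)) = X 0 := by
    have : (![0, 1, 2, 1, 2, 0] : Fin 6 → Fin 3) 5 = 0 := by decide
    simp [piOct, iotaOct, this]
  fin_cases i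
  · show X 0 - iotaOct (piOct (X 0)) ∈ Dspan
    rw [h0]; simpa using Ideal.zero_mem Dspan
  · show X 1 - iotaOct (piOct (X 1)) ∈ Dspan
    rw [h1]; simpa using Ideal.zero_mem Dspan
  · show X 2 - iotaOct (piOct (X 2)) ∈ Dspan
    rw [h2]; simpa using Ideal.zero_mem Dspan
  · show X 3 - iotaOct (piOct (X 3)) ∈ Dspan
    rw [h3]; exact Ideal.subset_span (by simp)
  · show X 4 - iotaOct (piOct (X 4)) ∈ Dspan
    rw [h4]; exact Ideal.subset_span (by simp)
  · show X 5 - iotaOct (piOct (X 5)) ∈ Dspan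
    rw [h5]; exact Ideal.subset_span (by simp)

lemma sub_fold_mem (f : MvPolynomial (Fin 6) ℝ) : f - iotaOct (piOct f) ∈ Dspan := by
  induction f using MvPolynomial.induction_on with
  | C a => simpa using Ideal.zero_mem Dspan
  | add p q hp hq =>
      have h : p + q - iotaOct (piOct (p + q)) =
          (p - iotaOct (piOct p)) + (q - iotaOct (piOct q)) := by
        simp only [map_add]; ring
      rw [h]; exact add_mem hp hq
  | mul_X p i hp =>
      have h : p * X i - iotaOct (piOct (p * X i)) =
          (p - iotaOct (piOct p)) * X i +
            iotaOct (piOct p) * (X i - iotaOct (piOct (X i))) := by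
        simp only [map_mul]; ring
      rw [h]
      exact add_mem (Ideal.mul_mem_right _ _ hp) (Ideal.mul_mem_left _ _ (fold_X i))

lemma Dspan_le : Dspan ≤ annIdeal Foct := by
  rw [Dspan, Ideal.span_le]
  rintro g hg
  simp only [Set.mem_insert_iff, Set.mem_singleton_iff] at hg
  rcases hg with rfl | rfl | rfl <;>
    · show dop 6 _ Foct = 0
      rw [map_sub, LinearMap.sub_apply, dop_X_apply, dop_X_apply, sub_eq_zero]
      simp only [Foct]
      simp [pderiv_X, Pi.single_apply]
      ring

lemma dop_fold (f : MvPolynomial (Fin 6) ℝ) :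
    dop 6 f Foct = dop 6 (iotaOct (piOct f)) Foct := by
  have h := Dspan_le (sub_fold_mem f)
  rw [mem_ann_iff, map_sub, LinearMap.sub_apply, sub_eq_zero] at h
  exact h

lemma Jmap_mem {g : MvPolynomial (Fin 3) ℝ} (hg : g ∈ Joct) :
    iotaOct g ∈ annIdeal Foct := by
  have hle : Ideal.map iotaOct Joct ≤ annIdeal Foct := by
    rw [Joct, Ideal.map_span, Ideal.span_le]
    rintro _ ⟨g, hg, rfl⟩
    simp only [Set.mem_insert_iff, Set.mem_singleton_iff] at hg
    rcases hg with rfl | rfl | rfl <;>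
      · show dop 6 _ Foct = 0
        rw [map_pow, sq, dop_mul_apply]
        simp [iotaOct, dop_X_apply, Foct, pderiv_X, Pi.single_apply]
  exact hle (Ideal.mem_map_of_mem _ hg)

lemma d0F : pderiv 0 Foct = (X 1 + X 3) * (X 2 + X 4) := by
  simp [Foct, pderiv_X, Pi.single_apply]; ring

lemma d1F : pderiv 1 Foct = (X 0 + X 5) * (X 2 + X 4) := by
  simp [Foct, pderiv_X, Pi.single_apply]; ring

lemma d2F : pderiv 2 Foct = (X 0 + X 5) * (X 1 + X 3) := by
  simp [Foct, pderiv_X, Pi.single_apply]; ring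

lemma d01 : pderiv 0 (((X 0 + X 5) * (X 2 + X 4)) : MvPolynomial (Fin 6) ℝ) = X 2 + X 4 := by
  simp [pderiv_X, Pi.single_apply]

lemma d02 : pderiv 0 (((X 0 + X 5) * (X 1 + X 3)) : MvPolynomial (Fin 6) ℝ) = X 1 + X 3 := by
  simp [pderiv_X, Pi.single_apply]

lemma d12 : pderiv 1 (((X 0 + X 5) * (X 1 + X 3)) : MvPolynomial (Fin 6) ℝ) = X 0 + X 5 := by
  simp [pderiv_X, Pi.single_apply]

lemma d012 : pderiv 0 ((X 0 + X 5) : MvPolynomial (Fin 6) ℝ) = 1 := by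
  simp [pderiv_X, Pi.single_apply]

def Nf (c0 c1 c2 c3 c4 c5 c6 c7 : ℝ) : MvPolynomial (Fin 3) ℝ :=
  C c0 + C c1 * X 0 + C c2 * X 1 + C c3 * X 2 +
    C c4 * (X 0 * X 1) + C c5 * (X 0 * X 2) + C c6 * (X 1 * X 2) +
    C c7 * (X 0 * X 1 * X 2)

lemma X_sq_mem (i : Fin 3) : (X i : MvPolynomial (Fin 3) ℝ) ^ 2 ∈ Joct := by
  fin_cases i <;> exact Ideal.subset_span (by simp)

lemma exists_nf (g : MvPolynomial (Fin 3) ℝ) :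
    ∃ c0 c1 c2 c3 c4 c5 c6 c7 : ℝ, g - Nf c0 c1 c2 c3 c4 c5 c6 c7 ∈ Joct := by
  induction g using MvPolynomial.induction_on' with
  | add p q hp hq =>
      obtain ⟨c0, c1, c2, c3, c4, c5, c6, c7, hc⟩ := hp
      obtain ⟨d0, d1, d2, d3, d4, d5, d6, d7, hd⟩ := hq
      refine ⟨c0 + d0, c1 + d1, c2 + d2, c3 + d3, c4 + d4, c5 + d5, c6 + d6, c7 + d7, ?_⟩
      have h : p + q - Nf (c0+d0) (c1+d1) (c2+d2) (c3+d3) (c4+d4) (c5+d5) (c6+d6) (c7+d7) =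
          (p - Nf c0 c1 c2 c3 c4 c5 c6 c7) + (q - Nf d0 d1 d2 d3 d4 d5 d6 d7) := by
        simp only [Nf, map_add]; ring
      rw [h]; exact add_mem hc hd
  | monomial m a =>
      by_cases h : ∀ i, m i ≤ 1
      · have hm : m = Finsupp.single 0 (m 0) + Finsupp.single 1 (m 1) +
            Finsupp.single 2 (m 2) := by
          ext j; fin_cases j <;> simp [Finsupp.single_apply]
        rcases Nat.le_one_iff_eq_zero_or_eq_one.mp (h 0) with h0 | h0 <;>
          rcases Nat.le_one_iff_eq_zero_or_eq_one.mp (h 1) with h1 | h1 <;>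
          rcases Nat.le_one_iff_eq_zero_or_eq_one.mp (h 2) with h2 | h2 <;>
          rw [h0, h1, h2] at hm
        · refine ⟨a, 0, 0, 0, 0, 0, 0, 0, ?_⟩
          rw [hm]
          simp [Nf, monomial_eq]
        · refine ⟨0, 0, 0, a, 0, 0, 0, 0, ?_⟩
          rw [hm]
          simp [Nf, monomial_eq, Fin.prod_univ_succ, Finsupp.single_apply, mul_assoc]
        · refine ⟨0, 0, a, 0, 0, 0, 0, 0, ?_⟩
          rw [hm]
          simp [Nf, monomial_eq, Fin.prod_univ_succ, Finsupp.single_apply, mul_assoc]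
        · refine ⟨0, 0, 0, 0, 0, 0, a, 0, ?_⟩
          rw [hm]
          simp [Nf, monomial_eq, Fin.prod_univ_succ, Finsupp.single_apply, mul_assoc]
        · refine ⟨0, a, 0, 0, 0, 0, 0, 0, ?_⟩
          rw [hm]
          simp [Nf, monomial_eq, Fin.prod_univ_succ, Finsupp.single_apply, mul_assoc]
        · refine ⟨0, 0, 0, 0, 0, a, 0, 0, ?_⟩
          rw [hm]
          simp [Nf, monomial_eq, Fin.prod_univ_succ, Finsupp.single_apply, mul_assoc]
        · refine ⟨0, 0, 0, 0, a, 0, 0, 0, ?_⟩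
          rw [hm]
          simp [Nf, monomial_eq, Fin.prod_univ_succ, Finsupp.single_apply, mul_assoc]
        · refine ⟨0, 0, 0, 0, 0, 0, 0, a, ?_⟩
          rw [hm]
          simp [Nf, monomial_eq, Fin.prod_univ_succ, Finsupp.single_apply, mul_assoc]
      · push_neg at h
        obtain ⟨i, hi⟩ := h
        refine ⟨0, 0, 0, 0, 0, 0, 0, 0, ?_⟩
        have hN : Nf 0 0 0 0 0 0 0 0 = 0 := by simp [Nf]
        rw [hN, sub_zero]
        have hd : (monomial m a : MvPolynomial (Fin 3) ℝ) =
            X i ^ 2 * monomial (m - Finsupp.single i 2) a := by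
          rw [X_pow_eq_monomial, monomial_mul, one_mul]
          have he : Finsupp.single i 2 + (m - Finsupp.single i 2) = m := by
            ext j
            rcases eq_or_ne j i with rfl | hj
            · simp; omega
            · simp [Finsupp.single_eq_of_ne hj]
          rw [he]
        rw [hd]
        exact Ideal.mul_mem_right _ _ (X_sq_mem i)

lemma dop_Nf (c0 c1 c2 c3 c4 c5 c6 c7 : ℝ) :
    dop 6 (iotaOct (Nf c0 c1 c2 c3 c4 c5 c6 c7)) Foct =
    c0 • Foct + c1 • ((X 1 + X 3) * (X 2 + X 4)) + c2 • ((X 0 + X 5) * (X 2 + X 4)) +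
      c3 • ((X 0 + X 5) * (X 1 + X 3)) + c4 • (X 2 + X 4) + c5 • (X 1 + X 3) +
      c6 • (X 0 + X 5) + c7 • (1 : MvPolynomial (Fin 6) ℝ) := by
  have e0 : iotaOct (X 0) = X 0 := by simp [iotaOct]
  have e1 : iotaOct (X 1) = X 1 := by simp [iotaOct]
  have e2 : iotaOct (X 2) = X 2 := by simp [iotaOct]
  have eC : ∀ r : ℝ, iotaOct (C r) = C r := fun r => by
    rw [← MvPolynomial.algebraMap_eq, AlgHom.commutes, MvPolynomial.algebraMap_eq]
  simp only [Nf, map_add, map_mul, e0, e1, e2, eC,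
    LinearMap.add_apply, Module.End.mul_apply, dop_mul_apply, dop_X_apply, dop_C_apply,
    d0F, d1F, d2F, d01, d02, d12, d012]
  simp [pderiv_X, Pi.single_apply, smul_eq_C_mul]

lemma v0 (a b c d e f : ℝ) : (![a,b,c,d,e,f] : Fin 6 → ℝ) 0 = a := rfl
lemma v1 (a b c d e f : ℝ) : (![a,b,c,d,e,f] : Fin 6 → ℝ) 1 = b := rfl
lemma v2 (a b c d e f : ℝ) : (![a,b,c,d,e,f] : Fin 6 → ℝ) 2 = c := rfl
lemma v3 (a b c d e f : ℝ) : (![a,b,c,d,e,f] : Fin 6 → ℝ) 3 = d := rfl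
lemma v4 (a b c d e f : ℝ) : (![a,b,c,d,e,f] : Fin 6 → ℝ) 4 = e := rfl
lemma v5 (a b c d e f : ℝ) : (![a,b,c,d,e,f] : Fin 6 → ℝ) 5 = f := rfl

lemma pi_mem_J_of_ann {f : MvPolynomial (Fin 6) ℝ} (hf : dop 6 f Foct = 0) :
    piOct f ∈ Joct := by
  obtain ⟨c0, c1, c2, c3, c4, c5, c6, c7, hc⟩ := exists_nf (piOct f)
  have h1 : dop 6 (iotaOct (piOct f)) Foct = 0 := by rw [← dop_fold]; exact hf
  have h3 : dop 6 (iotaOct (piOct f - Nf c0 c1 c2 c3 c4 c5 c6 c7)) Foct = 0 := Jmap_mem hc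
  have h2 : dop 6 (iotaOct (Nf c0 c1 c2 c3 c4 c5 c6 c7)) Foct = 0 := by
    have he : iotaOct (Nf c0 c1 c2 c3 c4 c5 c6 c7) =
        iotaOct (piOct f) - iotaOct (piOct f - Nf c0 c1 c2 c3 c4 c5 c6 c7) := by
      rw [map_sub]; ring
    rw [he, map_sub, LinearMap.sub_apply, h1, h3, sub_zero]
  rw [dop_Nf] at h2
  have E := fun p : Fin 6 → ℝ => congrArg (eval p) h2
  have E0 := E ![0,0,0,0,0,0]
  have E1 := E ![1,0,0,0,0,0]
  have E2 := E ![0,1,0,0,0,0]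
  have E3 := E ![0,0,1,0,0,0]
  have E4 := E ![1,1,0,0,0,0]
  have E5 := E ![1,0,1,0,0,0]
  have E6 := E ![0,1,1,0,0,0]
  have E7 := E ![1,1,1,0,0,0]
  simp only [Foct, smul_eq_C_mul, map_add, map_mul, map_one, map_zero, eval_C, eval_X,
    v0, v1, v2, v3, v4, v5] at E0 E1 E2 E3 E4 E5 E6 E7
  norm_num at E0 E1 E2 E3 E4 E5 E6 E7
  have g7 : c7 = 0 := by linarith
  have g6 : c6 = 0 := by linarith
  have g5 : c5 = 0 := by linarith
  have g4 : c4 = 0 := by linarith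
  have g3 : c3 = 0 := by linarith
  have g2 : c2 = 0 := by linarith
  have g1 : c1 = 0 := by linarith
  have g0 : c0 = 0 := by linarith
  rw [g0, g1, g2, g3, g4, g5, g6, g7] at hc
  simpa [Nf] using hc

lemma ann_eq_ker : annIdeal Foct = RingHom.ker PhiOct := by
  ext f
  rw [RingHom.mem_ker]
  constructor
  · intro hf
    rw [phi_eq, Ideal.Quotient.eq_zero_iff_mem]
    exact pi_mem_J_of_ann hf
  · intro hf
    rw [phi_eq, Ideal.Quotient.eq_zero_iff_mem] at hf
    have h := Jmap_mem hf
    rw [mem_ann_iff] at h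
    show dop 6 f Foct = 0
    rw [dop_fold]
    exact h

lemma phi_surj : Function.Surjective PhiOct := by
  intro y
  obtain ⟨g, rfl⟩ := Ideal.Quotient.mk_surjective y
  refine ⟨iotaOct g, ?_⟩
  rw [phi_eq]
  congr 1
  have h : piOct.comp iotaOct = AlgHom.id ℝ (MvPolynomial (Fin 3) ℝ) := by
    apply MvPolynomial.algHom_ext
    intro i
    fin_cases i <;> simp [piOct, iotaOct]
  calc piOct (iotaOct g) = (piOct.comp iotaOct) g := rfl
    _ = g := by rw [h]; rfl

end OctAux

/-- The algebra associated to the regular octahedron is isomorphic to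
`ℝ[t₁,t₂,t₃]/(t₁², t₂², t₃²)`, via the isomorphism induced by `Φ`. -/
theorem octahedron_algebra_iso :
    ∃ e : AF Foct ≃ₐ[ℝ] MvPolynomial (Fin 3) ℝ ⧸ Joct,
      ∀ f : MvPolynomial (Fin 6) ℝ,
        e (Ideal.Quotient.mk (annIdeal Foct) f) = PhiOct f := by
  refine ⟨(Ideal.quotientEquivAlgOfEq ℝ OctAux.ann_eq_ker).trans
      (Ideal.quotientKerAlgEquivOfSurjective OctAux.phi_surj), fun f => ?_⟩
  have h1 : (Ideal.quotientEquivAlgOfEq ℝ OctAux.ann_eq_ker)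
      (Ideal.Quotient.mk (annIdeal Foct) f) =
      Ideal.Quotient.mk (RingHom.ker PhiOct) f :=
    Ideal.quotientEquivAlgOfEq_mk ℝ OctAux.ann_eq_ker f
  rw [AlgEquiv.trans_apply, h1]
  rfl

end
end

section
/- Let F_dod ∈ ℝ[x_1,…,x_20] be the facet polynomial of the regular dodecahedron, let Λ be the set of the 90 degree-two monomials ∂_i∂_j (i < j) with ∂_i∂_j·F_dod ≠ 0, and let b = (b_1,…,b_20) ∈ ℝ^20 with b_i = 0 for i ∈ {6,7,8,9,10} and b_i = 1 otherwise. Then the 90×90 second Hessian matrix H²_{F_dod}(b) = ((e·e'·F_dod)(b))_{e,e'∈Λ} is degenerate, i.e. its determinant is 0. Consequently, ℓ_b = Σ_{i ∉ {6,7,8,9,10}} ∂_i is not a strong Lefschetz element of ℝ[∂_1,…,∂_20]/Ann(F_dod). -/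
open MvPolynomial

noncomputable section

/-- The facet polynomial of the regular dodecahedron
(vertices `0,…,19` standing for `1,…,20`). -/
def Fdod : MvPolynomial (Fin 20) ℝ :=
  X 0 * X 1 * X 2 * X 3 * X 4 + X 0 * X 1 * X 5 * X 6 * X 18 +
    X 1 * X 2 * X 6 * X 7 * X 19 + X 2 * X 3 * X 7 * X 8 * X 15 +
    X 3 * X 4 * X 8 * X 9 * X 16 + X 0 * X 4 * X 5 * X 9 * X 17 +
    X 10 * X 11 * X 12 * X 13 * X 14 + X 8 * X 10 * X 11 * X 15 * X 16 +
    X 9 * X 11 * X 12 * X 16 * X 17 + X 5 * X 12 * X 13 * X 17 * X 18 +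
    X 6 * X 13 * X 14 * X 18 * X 19 + X 7 * X 10 * X 14 * X 15 * X 19

/-- The point `b ∈ ℝ²⁰` with `bᵢ = 0` for `i ∈ {6,7,8,9,10}` (1-based), i.e. for
`i ∈ {5,6,7,8,9}` in `0`-based indexing, and `bᵢ = 1` otherwise. -/
def bDod : Fin 20 → ℝ := fun i => if (i : ℕ) ∈ ({5, 6, 7, 8, 9} : Finset ℕ) then 0 else 1

/-- The point `c ∈ ℝ²⁰` with `c₁ = 0` and `cᵢ = 1` for `i ≠ 1` (1-based). -/
def cDod : Fin 20 → ℝ := fun i => if i = 0 then 0 else 1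

open Classical in
/-- The set `Λ` of pairs `i < j` such that the degree-two monomial `∂ᵢ∂ⱼ` does not
annihilate `F_dod`, i.e. the pairs of vertices lying on a common face of the regular
dodecahedron; they index the second Hessian matrix of `F_dod`. -/
noncomputable def lamDod : Finset (Fin 20 × Fin 20) :=
  Finset.univ.filter fun p => p.1 < p.2 ∧ pderiv p.1 (pderiv p.2 Fdod) ≠ 0

def Gq : MvPolynomial (Fin 20) ℝ := X 0 * X 5 * X 6 - X 1 * X 5 * X 6

lemma hd018 : pderiv (0 : Fin 20) (pderiv (18 : Fin 20) Fdod) = X 1 * X 5 * X 6 := by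
  simp [Fdod, pderiv_mul]; ring

lemma hd118 : pderiv (1 : Fin 20) (pderiv (18 : Fin 20) Fdod) = X 0 * X 5 * X 6 := by
  simp [Fdod, pderiv_mul]; ring

lemma keyEval (i j : Fin 20) : eval bDod (pderiv i (pderiv j Gq)) = 0 := by
  fin_cases j <;>
    simp [Gq, bDod, pderiv_mul, Pi.single_apply, apply_ite (eval bDod)] <;>
    split_ifs <;> simp_all <;> omega

lemma dop_X_apply (i : Fin 20) (f : MvPolynomial (Fin 20) ℝ) :
    dop 20 (X i) f = pderiv i f := by
  simp [dop]

lemma sumZero : ∑ i : Fin 20, bDod i • pderiv i Gq = 0 := by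
  have h : ∀ i : Fin 20, bDod i • pderiv i Gq =
      (if i = 0 then X 5 * X 6 else 0) - (if i = 1 then X 5 * X 6 else 0) := by
    intro i
    fin_cases i <;> simp [bDod, Gq, pderiv_mul] <;> ring
  rw [Finset.sum_congr rfl fun i _ => h i, Finset.sum_sub_distrib,
    Finset.sum_ite_eq' Finset.univ (0 : Fin 20) fun _ => (X 5 * X 6 : MvPolynomial (Fin 20) ℝ),
    Finset.sum_ite_eq' Finset.univ (1 : Fin 20) fun _ => (X 5 * X 6 : MvPolynomial (Fin 20) ℝ)]
  simp

lemma dopL_apply (f : MvPolynomial (Fin 20) ℝ) :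
    dop 20 (∑ i, C (bDod i) * X i) f = ∑ i : Fin 20, bDod i • pderiv i f := by
  rw [map_sum, LinearMap.sum_apply]
  refine Finset.sum_congr rfl fun i _ => ?_
  rw [map_mul]
  have hC : dop 20 (C (bDod i)) = bDod i • 1 := by
    have h1 : (C (bDod i) : MvPolynomial (Fin 20) ℝ) = algebraMap ℝ _ (bDod i) := rfl
    rw [h1, AlgHom.commutes, Algebra.algebraMap_eq_smul_one]
  rw [hC, Module.End.mul_apply]
  simp [dop_X_apply]

lemma GqNe : Gq ≠ 0 := by
  intro h
  have := congrArg (eval fun i : Fin 20 => if i = 1 then (0 : ℝ) else 1) h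
  simp [Gq] at this

lemma dopQ : dop 20 (X 1 * X 18 - X 0 * X 18) Fdod = Gq := by
  rw [map_sub, map_mul, map_mul, LinearMap.sub_apply, Module.End.mul_apply, Module.End.mul_apply,
    dop_X_apply, dop_X_apply, dop_X_apply, hd018, hd118]
  rfl

lemma mem018 : ((0 : Fin 20), (18 : Fin 20)) ∈ lamDod := by
  refine Finset.mem_filter.mpr ⟨Finset.mem_univ _, by decide, ?_⟩
  rw [hd018]
  exact mul_ne_zero (mul_ne_zero (X_ne_zero _) (X_ne_zero _)) (X_ne_zero _)

lemma mem118 : ((1 : Fin 20), (18 : Fin 20)) ∈ lamDod := by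
  refine Finset.mem_filter.mpr ⟨Finset.mem_univ _, by decide, ?_⟩
  rw [hd118]
  exact mul_ne_zero (mul_ne_zero (X_ne_zero _) (X_ne_zero _)) (X_ne_zero _)

/-- The second Hessian matrix of the facet polynomial of the regular dodecahedron with
respect to `Λ`, evaluated at `b` (where `bᵢ = 0` for `i ∈ {6,7,8,9,10}` and `bᵢ = 1`
otherwise), is degenerate; consequently `ℓ_b = Σ_{i ∉ {6,7,8,9,10}} ∂ᵢ` is not a strong
Lefschetz element of the associated algebra. -/
theorem dodecahedron_second_hessian_at_b_degenerate :
    (Matrix.of fun e e' : lamDod =>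
        eval bDod
          (pderiv e.1.1 (pderiv e.1.2 (pderiv e'.1.1 (pderiv e'.1.2 Fdod))))).det = 0 ∧
      ¬ IsSLelem Fdod 5 (Ideal.Quotient.mk (annIdeal Fdod) (∑ i, C (bDod i) * X i)) := by
  constructor
  · rw [← Matrix.exists_mulVec_eq_zero_iff]
    set a : ↥lamDod := ⟨(0, 18), mem018⟩
    set bb : ↥lamDod := ⟨(1, 18), mem118⟩
    refine ⟨fun e => if e = a then -1 else if e = bb then 1 else 0, ?_, ?_⟩
    · intro h
      have := congrFun h a
      simp at this
    · funext e
      have hsplit : ∀ e' : ↥lamDod,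
          (Matrix.of fun e e' : lamDod =>
            eval bDod (pderiv e.1.1 (pderiv e.1.2 (pderiv e'.1.1 (pderiv e'.1.2 Fdod))))) e e' *
            (if e' = a then (-1 : ℝ) else if e' = bb then 1 else 0) =
          (if e' = a then -(eval bDod (pderiv e.1.1 (pderiv e.1.2 (X 1 * X 5 * X 6)))) else 0) +
          (if e' = bb then eval bDod (pderiv e.1.1 (pderiv e.1.2 (X 0 * X 5 * X 6))) else 0) := by
        intro e'
        rcases eq_or_ne e' a with rfl | h1
        · have : (a : ↥lamDod) ≠ bb := by
            intro h; exact absurd (congrArg (fun x => x.1.1) h) (by decide)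
          simp [this, Matrix.of_apply, a, hd018]
        · rcases eq_or_ne e' bb with rfl | h2
          · simp [h1, Matrix.of_apply, bb, hd118]
          · simp [h1, h2]
      rw [Matrix.mulVec, Pi.zero_apply]
      show ∑ e' : ↥lamDod, _ = 0
      rw [Finset.sum_congr rfl fun e' _ => hsplit e', Finset.sum_add_distrib,
        Finset.sum_ite_eq' Finset.univ a, Finset.sum_ite_eq' Finset.univ bb]
      simp only [Finset.mem_univ, if_true]
      have := keyEval e.1.1 e.1.2
      rw [Gq, map_sub, map_sub, map_sub] at this
      linarith
  · intro hSL
    have h2 := hSL 2 (by norm_num)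
    have hQhom : (X 1 * X 18 - X 0 * X 18 : MvPolynomial (Fin 20) ℝ) ∈
        homogeneousSubmodule (Fin 20) ℝ 2 := by
      rw [mem_homogeneousSubmodule]
      exact (((isHomogeneous_X _ _).mul (isHomogeneous_X _ _)).sub
        ((isHomogeneous_X _ _).mul (isHomogeneous_X _ _)))
    set Q : MvPolynomial (Fin 20) ℝ := X 1 * X 18 - X 0 * X 18 with hQ
    set L : MvPolynomial (Fin 20) ℝ := ∑ i, C (bDod i) * X i with hL
    have hmemQ : Ideal.Quotient.mk (annIdeal Fdod) Q ∈ (gradeA Fdod 2 : Set (AF Fdod)) :=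
      ⟨Q, hQhom, by simp [Ideal.Quotient.mkₐ_eq_mk]⟩
    have hmem0 : (0 : AF Fdod) ∈ (gradeA Fdod 2 : Set (AF Fdod)) := (gradeA Fdod 2).zero_mem
    have hLQ : L * Q ∈ annIdeal Fdod := by
      show dop 20 (L * Q) Fdod = 0
      rw [map_mul, Module.End.mul_apply, dopQ, dopL_apply, sumZero]
    have heq : (fun f => Ideal.Quotient.mk (annIdeal Fdod) L ^ (5 - 2 * 2) * f)
          (Ideal.Quotient.mk (annIdeal Fdod) Q) =
        (fun f => Ideal.Quotient.mk (annIdeal Fdod) L ^ (5 - 2 * 2) * f) 0 := by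
      have h54 : (5 - 2 * 2 : ℕ) = 1 := rfl
      simp only [h54, pow_one, mul_zero]
      rw [← map_mul, Ideal.Quotient.eq_zero_iff_mem]
      exact hLQ
    have := h2.injOn hmemQ hmem0 heq
    rw [Ideal.Quotient.eq_zero_iff_mem] at this
    have : dop 20 Q Fdod = 0 := this
    rw [dopQ] at this
    exact GqNe this

end
end
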